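/- If the two-element set {x_{n+1}, x̄_{n+2}} is a preferred extension of the argument system H_Ψ, then Φ is unsatisfiable. Equivalently, if Φ is satisfiable then there is an admissible set of H_Ψ strictly containing {x_{n+1}, x̄_{n+2}}, so {x_{n+1}, x̄_{n+2}} is not a maximal admissible set. -/

import Mathlib

/-- `att y x` means "y attacks x". `S` is conflict-free if no argument in `S`
attacks an argument in `S`. -/
def conflictFree {V : Type*} (att : V → V → Prop) (S : Set V) : Prop :=
  ∀ x ∈ S, ∀ y ∈ S, ¬ att y x

/-- `x` is acceptable w.r.t. `S` if every attacker of `x` is attacked by some member of `S`. -/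
def acceptable {V : Type*} (att : V → V → Prop) (S : Set V) (x : V) : Prop :=
  ∀ y, att y x → ∃ z ∈ S, att z y

/-- `S` is admissible if it is conflict-free and each member is acceptable w.r.t. `S`. -/
def admissible {V : Type*} (att : V → V → Prop) (S : Set V) : Prop :=
  conflictFree att S ∧ ∀ x ∈ S, acceptable att S x

/-- A preferred extension is a ⊆-maximal admissible set. -/
def preferredExt {V : Type*} (att : V → V → Prop) (S : Set V) : Prop :=
  admissible att S ∧ ∀ T, admissible att T → S ⊆ T → S = T

/-- A stable extension is a conflict-free set attacking every outside argument. -/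
def stableExt {V : Type*} (att : V → V → Prop) (S : Set V) : Prop :=
  conflictFree att S ∧ ∀ y, y ∉ S → ∃ z ∈ S, att z y

/-- A 3-CNF over variables `Fin n` is given by `C : Fin m → Fin 3 → Fin n × Bool`,
where literal `(k, true)` is `x_k` and `(k, false)` is `¬x_k`.
`PhiSat C α` says the assignment `α` satisfies `Φ = ∧_i C_i`. -/
def PhiSat {n m : ℕ} (C : Fin m → Fin 3 → Fin n × Bool) (α : Fin n → Bool) : Prop :=
  ∀ i : Fin m, ∃ j : Fin 3, α (C i j).1 = (C i j).2

/-- The new variable `x_{n+1}` as an element of `Fin (n+2)`. -/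
def vn1 (n : ℕ) : Fin (n + 2) := ⟨n, by omega⟩

/-- The new variable `x_{n+2}` as an element of `Fin (n+2)`. -/
def vn2 (n : ℕ) : Fin (n + 2) := ⟨n + 1, by omega⟩

/-- `PsiSat C α` says `α : Fin (n+2) → Bool` satisfies
`Ψ = ∧_i (C_i ∨ ¬x_{n+1} ∨ x_{n+2}) ∧ (C_i ∨ x_{n+1} ∨ ¬x_{n+2})`. -/
def PsiSat {n m : ℕ} (C : Fin m → Fin 3 → Fin n × Bool) (α : Fin (n + 2) → Bool) : Prop :=
  ∀ i : Fin m,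
    ((∃ j : Fin 3, α (Fin.castAdd 2 (C i j).1) = (C i j).2) ∨
       α (vn1 n) = false ∨ α (vn2 n) = true) ∧
    ((∃ j : Fin 3, α (Fin.castAdd 2 (C i j).1) = (C i j).2) ∨
       α (vn1 n) = true ∨ α (vn2 n) = false)

/-- The arguments of the system `H_Ψ`: the argument `Ψ`, the argument `χ`,
literal arguments `x_i` (`pos i`) and `x̄_i` (`neg i`) for `1 ≤ i ≤ n+2`, and
clause arguments `C_j^(1)` (`c1 j`) and `C_j^(2)` (`c2 j`) for `1 ≤ j ≤ m`. -/
inductive Arg (n m : ℕ) : Type where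
  | psi : Arg n m
  | chi : Arg n m
  | pos : Fin (n + 2) → Arg n m
  | neg : Fin (n + 2) → Arg n m
  | c1 : Fin m → Arg n m
  | c2 : Fin m → Arg n m

/-- The literal argument corresponding to a literal: `x_k` for `(k, true)`,
`x̄_k` for `(k, false)`. -/
def litArg {n m : ℕ} (l : Fin n × Bool) : Arg n m :=
  if l.2 then Arg.pos (Fin.castAdd 2 l.1) else Arg.neg (Fin.castAdd 2 l.1)

/-- The attack relation of `H_Ψ`: `attPsi C a b` means `a` attacks `b`. -/
inductive attPsi {n m : ℕ} (C : Fin m → Fin 3 → Fin n × Bool) : Arg n m → Arg n m → Prop where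
  | posNeg (i : Fin (n + 2)) : attPsi C (.pos i) (.neg i)
  | negPos (i : Fin (n + 2)) : attPsi C (.neg i) (.pos i)
  | chiPos (i : Fin n) : attPsi C .chi (.pos (Fin.castAdd 2 i))
  | chiNeg (i : Fin n) : attPsi C .chi (.neg (Fin.castAdd 2 i))
  | litC1 (i : Fin m) (j : Fin 3) : attPsi C (litArg (C i j)) (.c1 i)
  | litC2 (i : Fin m) (j : Fin 3) : attPsi C (litArg (C i j)) (.c2 i)
  | c1Psi (i : Fin m) : attPsi C (.c1 i) .psi
  | c2Psi (i : Fin m) : attPsi C (.c2 i) .psi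
  | negN1C1 (i : Fin m) : attPsi C (.neg (vn1 n)) (.c1 i)
  | posN2C1 (i : Fin m) : attPsi C (.pos (vn2 n)) (.c1 i)
  | posN1C2 (i : Fin m) : attPsi C (.pos (vn1 n)) (.c2 i)
  | negN2C2 (i : Fin m) : attPsi C (.neg (vn2 n)) (.c2 i)
  | psiChi : attPsi C .psi .chi

/-- The set `S_α = {Ψ} ∪ {x_i : α(x_i) = ⊤} ∪ {x̄_i : α(x_i) = ⊥}`. -/
def Salpha {n m : ℕ} (α : Fin (n + 2) → Bool) : Set (Arg n m) :=
  fun a =>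
    match a with
    | .psi => True
    | .pos i => α i = true
    | .neg i => α i = false
    | _ => False

/-- If `{x_{n+1}, x̄_{n+2}}` is a preferred extension of `H_Ψ` then `Φ` is
unsatisfiable; equivalently, if `Φ` is satisfiable then some admissible set of
`H_Ψ` strictly contains `{x_{n+1}, x̄_{n+2}}`, so that set is not a maximal
admissible set. -/
theorem stmt_12 (n m : ℕ) (hn : 1 ≤ n) (hm : 1 ≤ m)
    (C : Fin m → Fin 3 → Fin n × Bool) :
    (preferredExt (attPsi C) ({Arg.pos (vn1 n), Arg.neg (vn2 n)} : Set (Arg n m)) →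
        ¬ ∃ β : Fin n → Bool, PhiSat C β) ∧
    ((∃ β : Fin n → Bool, PhiSat C β) →
        ∃ T : Set (Arg n m), admissible (attPsi C) T ∧
          ({Arg.pos (vn1 n), Arg.neg (vn2 n)} : Set (Arg n m)) ⊂ T) := by
  have key : (∃ β : Fin n → Bool, PhiSat C β) →
      ∃ T : Set (Arg n m), admissible (attPsi C) T ∧
        ({Arg.pos (vn1 n), Arg.neg (vn2 n)} : Set (Arg n m)) ⊂ T := by
    rintro ⟨β, hβ⟩
    set α : Fin (n + 2) → Bool :=
      fun i => if h : (i : ℕ) < n then β ⟨i, h⟩ else decide ((i : ℕ) = n) with hαdef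
    have hα1 : α (vn1 n) = true := by simp [hαdef, vn1]
    have hα2 : α (vn2 n) = false := by simp [hαdef, vn2]
    have hαc : ∀ k : Fin n, α (Fin.castAdd 2 k) = β k := by
      intro k; simp [hαdef, Fin.castAdd, k.isLt]
    have hlit : ∀ i : Fin m, ∃ j : Fin 3,
        (litArg (C i j) : Arg n m) ∈ (Salpha α : Set (Arg n m)) := by
      intro i
      obtain ⟨j, hj⟩ := hβ i
      refine ⟨j, ?_⟩
      unfold litArg
      rcases hb : (C i j).2 with _ | _
      · rw [if_neg (by simp)]
        show α (Fin.castAdd 2 (C i j).1) = false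
        rw [hαc, hj, hb]
      · rw [if_pos rfl]
        show α (Fin.castAdd 2 (C i j).1) = true
        rw [hαc, hj, hb]
    refine ⟨Salpha α, ⟨?_, ?_⟩, ?_⟩
    · -- conflict-free
      intro x hx y hy hatt
      cases hatt <;> simp_all [Salpha, Membership.mem, Set.Mem]
    · -- acceptability
      intro x hx
      match x, hx with
      | .psi, _ =>
        intro y hy
        cases hy with
        | c1Psi i =>
          obtain ⟨j, hmem⟩ := hlit i
          exact ⟨_, hmem, attPsi.litC1 i j⟩
        | c2Psi i =>
          obtain ⟨j, hmem⟩ := hlit i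
          exact ⟨_, hmem, attPsi.litC2 i j⟩
      | .pos i, hx =>
        intro y hy
        cases hy with
        | negPos => exact ⟨Arg.pos i, hx, attPsi.posNeg i⟩
        | chiPos => exact ⟨Arg.psi, trivial, attPsi.psiChi⟩
      | .neg i, hx =>
        intro y hy
        cases hy with
        | posNeg => exact ⟨Arg.neg i, hx, attPsi.negPos i⟩
        | chiNeg => exact ⟨Arg.psi, trivial, attPsi.psiChi⟩
    · -- strict superset
      constructor
      · rintro a (rfl | rfl)
        · exact hα1
        · exact hα2
      · intro h
        have : (Arg.psi : Arg n m) ∈ ({Arg.pos (vn1 n), Arg.neg (vn2 n)} : Set (Arg n m)) :=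
          h trivial
        simp at this
  refine ⟨?_, key⟩
  intro hpref hsat
  obtain ⟨T, hadm, hss⟩ := key hsat
  exact hss.ne (hpref.2 T hadm hss.subset)
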